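/- Let X ⊆ ℝᵐ and Y ⊆ ℝˡ be nonempty closed convex sets, Z = X × Y, and let f : Z → ℝ be differentiable, convex in x for each fixed y, and concave in y for each fixed x. Define F(x,y) = (∇ₓ f(x,y), −∇_y f(x,y)). Let X′ ⊆ X and Y′ ⊆ Y be nonempty sets each of Euclidean diameter at most D, and let z = (x,y) ∈ X′ × Y′. Then the duality gap satisfies dg(z) = sup_{y′ ∈ Y′} f(x,y′) − inf_{x′ ∈ X′} f(x′,y) ≤ √2 · D · r^tan_{(F,Z)}(z). -/

import Mathlib

open scoped RealInnerProductSpace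

/-- The tangent residual `r^tan_{(F,Z)}(z) = inf_{a ∈ N_Z(z)} ‖F z + a‖`. -/
noncomputable def rtan {E : Type*} [NormedAddCommGroup E] [InnerProductSpace ℝ E]
    (F : E → E) (Z : Set E) (z : E) : ℝ :=
  sInf ((fun a => ‖F z + a‖) '' {v | ∀ z' ∈ Z, ⟪v, z' - z⟫ ≤ 0})

lemma inner_gradient_le_of_convexOn {E : Type*} [NormedAddCommGroup E] [InnerProductSpace ℝ E] [CompleteSpace E]
    {g : E → ℝ} {S : Set E} (hconv : ConvexOn ℝ S g) {x x' : E} (hx : x ∈ S) (hx' : x' ∈ S)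
    (hg : DifferentiableAt ℝ g x) : ⟪gradient g x, x' - x⟫ ≤ g x' - g x := by
  set v := x' - x with hv
  have hfd : HasFDerivAt g (InnerProductSpace.toDual ℝ E (gradient g x)) x :=
    hasGradientAt_iff_hasFDerivAt.1 hg.hasGradientAt
  have hline : HasDerivAt (fun t : ℝ => t • v + x) v 0 := by
    simpa using ((hasDerivAt_id (0 : ℝ)).smul_const v).add_const x
  have hφfun : (fun t : ℝ => g (AffineMap.lineMap x x' t)) = fun t : ℝ => g (t • v + x) := by
    funext t
    simp [AffineMap.lineMap_apply, hv]
  have hφ : HasDerivAt (fun t : ℝ => g (AffineMap.lineMap x x' t)) ⟪gradient g x, v⟫ 0 := by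
    rw [hφfun]
    have hfd' : HasFDerivAt g (InnerProductSpace.toDual ℝ E (gradient g x)) ((0 : ℝ) • v + x) := by
      simpa using hfd
    simpa [InnerProductSpace.toDual_apply_apply, Function.comp_def] using hfd'.comp_hasDerivAt 0 hline
  have hcc : ConvexOn ℝ (Set.Icc (0 : ℝ) 1) (fun t => g (AffineMap.lineMap x x' t)) := by
    refine ConvexOn.subset (hconv.comp_affineMap (AffineMap.lineMap x x')) ?_ (convex_Icc 0 1)
    intro t ht
    simp only [Set.mem_preimage, AffineMap.lineMap_apply_module]
    exact hconv.1 hx hx' (by linarith [ht.2]) ht.1 (by ring)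
  have := hcc.le_slope_of_hasDerivAt (Set.left_mem_Icc.2 zero_le_one)
    (Set.right_mem_Icc.2 zero_le_one) zero_lt_one hφ
  simpa [slope_def_field] using this

lemma sub_le_inner_gradient_of_concaveOn {E : Type*} [NormedAddCommGroup E]
    [InnerProductSpace ℝ E] [CompleteSpace E] {g : E → ℝ} {S : Set E} (hconc : ConcaveOn ℝ S g) {x x' : E}
    (hx : x ∈ S) (hx' : x' ∈ S) (hg : DifferentiableAt ℝ g x) :
    g x' - g x ≤ ⟪gradient g x, x' - x⟫ := by
  have hneg : HasGradientAt (fun t => -g t) (-gradient g x) x := by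
    rw [hasGradientAt_iff_hasFDerivAt, map_neg]
    exact (hasGradientAt_iff_hasFDerivAt.1 hg.hasGradientAt).neg
  have h := inner_gradient_le_of_convexOn hconc.neg hx hx' hg.neg
  have hgr : gradient (-g) x = -gradient g x := hneg.gradient
  rw [hgr] at h
  simp only [inner_neg_left, Pi.neg_apply] at h
  linarith


/-- The duality gap bound for convex-concave saddle point problems: with
`Z = X × Y` (as an `ℓ²` product), `F(x,y) = (∇ₓ f(x,y), -∇_y f(x,y))`, nonempty
`X' ⊆ X`, `Y' ⊆ Y` of diameter at most `D`, and `z = (x,y) ∈ X' × Y'`, one has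
`sup_{y' ∈ Y'} f(x,y') - inf_{x' ∈ X'} f(x',y) ≤ √2 · D · r^tan_{(F,Z)}(z)`. -/
theorem duality_gap_le_sqrt_two_D_mul_tangent_residual {m l : ℕ}
    (X : Set (EuclideanSpace ℝ (Fin m))) (Y : Set (EuclideanSpace ℝ (Fin l)))
    (hXne : X.Nonempty) (hXcl : IsClosed X) (hXconv : Convex ℝ X)
    (hYne : Y.Nonempty) (hYcl : IsClosed Y) (hYconv : Convex ℝ Y)
    (f : WithLp 2 (EuclideanSpace ℝ (Fin m) × EuclideanSpace ℝ (Fin l)) → ℝ)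
    (hdiff : Differentiable ℝ f)
    (hcvx : ∀ y ∈ Y, ConvexOn ℝ X fun x' =>
      f ((WithLp.equiv 2 (EuclideanSpace ℝ (Fin m) × EuclideanSpace ℝ (Fin l))).symm (x', y)))
    (hccv : ∀ x ∈ X, ConcaveOn ℝ Y fun y' =>
      f ((WithLp.equiv 2 (EuclideanSpace ℝ (Fin m) × EuclideanSpace ℝ (Fin l))).symm (x, y')))
    (X' : Set (EuclideanSpace ℝ (Fin m))) (Y' : Set (EuclideanSpace ℝ (Fin l)))
    (hX'ne : X'.Nonempty) (hY'ne : Y'.Nonempty) (hX' : X' ⊆ X) (hY' : Y' ⊆ Y)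
    (D : ℝ)
    (hX'diam : ∀ a ∈ X', ∀ b ∈ X', dist a b ≤ D)
    (hY'diam : ∀ a ∈ Y', ∀ b ∈ Y', dist a b ≤ D)
    (x : EuclideanSpace ℝ (Fin m)) (y : EuclideanSpace ℝ (Fin l))
    (hx : x ∈ X') (hy : y ∈ Y') :
    sSup ((fun y' => f ((WithLp.equiv 2 _).symm (x, y'))) '' Y') -
        sInf ((fun x' => f ((WithLp.equiv 2 _).symm (x', y))) '' X') ≤
      Real.sqrt 2 * D *
        rtan
          (fun p => (WithLp.equiv 2 _).symm
            (gradient (fun x' => f ((WithLp.equiv 2 _).symm (x', (WithLp.equiv 2 _ p).2)))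
              ((WithLp.equiv 2 _ p).1),
             -gradient (fun y' => f ((WithLp.equiv 2 _).symm ((WithLp.equiv 2 _ p).1, y')))
              ((WithLp.equiv 2 _ p).2)))
          {p | (WithLp.equiv 2 _ p).1 ∈ X ∧ (WithLp.equiv 2 _ p).2 ∈ Y}
          ((WithLp.equiv 2 _).symm (x, y)) := by
  
  have hD0 : 0 ≤ D := le_trans dist_nonneg (hX'diam x hx x hx)
  have hsqrt2D : 0 ≤ Real.sqrt 2 * D := mul_nonneg (Real.sqrt_nonneg 2) hD0
  -- differentiability of partial maps
  have hdiffx : ∀ y0 : EuclideanSpace ℝ (Fin l), Differentiable ℝ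
      (fun x' : EuclideanSpace ℝ (Fin m) =>
        f ((WithLp.equiv 2 (EuclideanSpace ℝ (Fin m) × EuclideanSpace ℝ (Fin l))).symm
          (x', y0))) := by
    intro y0
    have h1 : Differentiable ℝ
        (fun q : EuclideanSpace ℝ (Fin m) × EuclideanSpace ℝ (Fin l) =>
          (WithLp.prodContinuousLinearEquiv 2 ℝ (EuclideanSpace ℝ (Fin m))
            (EuclideanSpace ℝ (Fin l))).symm q) :=
      (WithLp.prodContinuousLinearEquiv 2 ℝ (EuclideanSpace ℝ (Fin m))
            (EuclideanSpace ℝ (Fin l))).symm.differentiable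
    have h2 : Differentiable ℝ
        (fun x' : EuclideanSpace ℝ (Fin m) => (x', y0)) :=
      differentiable_id.prodMk (differentiable_const _)
    exact hdiff.comp (h1.comp h2)
  have hdiffy : ∀ x0 : EuclideanSpace ℝ (Fin m), Differentiable ℝ
      (fun y' : EuclideanSpace ℝ (Fin l) =>
        f ((WithLp.equiv 2 (EuclideanSpace ℝ (Fin m) × EuclideanSpace ℝ (Fin l))).symm
          (x0, y'))) := by
    intro x0
    have h1 : Differentiable ℝ
        (fun q : EuclideanSpace ℝ (Fin m) × EuclideanSpace ℝ (Fin l) =>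
          (WithLp.prodContinuousLinearEquiv 2 ℝ (EuclideanSpace ℝ (Fin m))
            (EuclideanSpace ℝ (Fin l))).symm q) :=
      (WithLp.prodContinuousLinearEquiv 2 ℝ (EuclideanSpace ℝ (Fin m))
            (EuclideanSpace ℝ (Fin l))).symm.differentiable
    have h2 : Differentiable ℝ
        (fun y' : EuclideanSpace ℝ (Fin l) => (x0, y')) :=
      (differentiable_const _).prodMk differentiable_id
    exact hdiff.comp (h1.comp h2)
  set R := rtan
          (fun p => (WithLp.equiv 2 _).symm
            (gradient (fun x' => f ((WithLp.equiv 2 _).symm (x', (WithLp.equiv 2 _ p).2)))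
              ((WithLp.equiv 2 _ p).1),
             -gradient (fun y' => f ((WithLp.equiv 2 _).symm ((WithLp.equiv 2 _ p).1, y')))
              ((WithLp.equiv 2 _ p).2)))
          {p | (WithLp.equiv 2 _ p).1 ∈ X ∧ (WithLp.equiv 2 _ p).2 ∈ Y}
          ((WithLp.equiv 2 _).symm (x, y)) with hR
  -- the central pointwise estimate
  have key : ∀ x' ∈ X', ∀ y' ∈ Y',
      f ((WithLp.equiv 2 _).symm (x, y')) - f ((WithLp.equiv 2 _).symm (x', y)) ≤
        Real.sqrt 2 * D * R := by
    intro x' hx'X' y' hy'Y'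
    rw [hR]
    unfold rtan
    show _ ≤ (Real.sqrt 2 * D) •
      sInf ((fun a => ‖_ + a‖) '' {v | ∀ z' ∈ _, ⟪v, z' - _⟫ ≤ 0})
    rw [← Real.sInf_smul_of_nonneg hsqrt2D]
    apply le_csInf
    · refine (Set.Nonempty.image _ ?_).smul_set
      exact ⟨0, fun z' _ => by simp⟩
    · rintro b hb
      rw [Set.mem_smul_set] at hb
      obtain ⟨c, hc, rfl⟩ := hb
      obtain ⟨a, ha, rfl⟩ := hc
      -- names
      set gx := gradient (fun x'' => f ((WithLp.equiv 2 _).symm (x'', y))) x with hgx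
      set gy := gradient (fun y'' => f ((WithLp.equiv 2 _).symm (x, y''))) y with hgy
      set z := (WithLp.equiv 2
        (EuclideanSpace ℝ (Fin m) × EuclideanSpace ℝ (Fin l))).symm (x, y) with hzdef
      set z' := (WithLp.equiv 2
        (EuclideanSpace ℝ (Fin m) × EuclideanSpace ℝ (Fin l))).symm (x', y') with hz'def
      have hz'Z : (WithLp.equiv 2 _ z').1 ∈ X ∧ (WithLp.equiv 2 _ z').2 ∈ Y := by
        constructor <;> simp [hz'def]
        · exact hX' hx'X'
        · exact hY' hy'Y'
      -- step A : convexity/concavity estimates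
      have hA1 : ⟪gx, x' - x⟫ ≤ f ((WithLp.equiv 2 _).symm (x', y)) -
          f ((WithLp.equiv 2 _).symm (x, y)) :=
        inner_gradient_le_of_convexOn (hcvx y (hY' hy)) (hX' hx) (hX' hx'X')
          ((hdiffx y) x)
      have hA2 : f ((WithLp.equiv 2 _).symm (x, y')) - f ((WithLp.equiv 2 _).symm (x, y)) ≤
          ⟪gy, y' - y⟫ :=
        sub_le_inner_gradient_of_concaveOn (hccv x (hX' hx)) (hY' hy) (hY' hy'Y')
          ((hdiffy x) y)
      -- the operator value at z
      have hFz : (fun p => (WithLp.equiv 2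
            (EuclideanSpace ℝ (Fin m) × EuclideanSpace ℝ (Fin l))).symm
            (gradient (fun x'' => f ((WithLp.equiv 2 _).symm (x'', (WithLp.equiv 2 _ p).2)))
              ((WithLp.equiv 2 _ p).1),
             -gradient (fun y'' => f ((WithLp.equiv 2 _).symm ((WithLp.equiv 2 _ p).1, y'')))
              ((WithLp.equiv 2 _ p).2))) z
          = (WithLp.equiv 2 _).symm (gx, -gy) := rfl
      -- step B/C : inner product estimates
      have hB : ⟪(WithLp.equiv 2 _).symm (gx, -gy), z - z'⟫ ≤
          ⟪(WithLp.equiv 2 _).symm (gx, -gy) + a, z - z'⟫ := by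
        have h0 : ⟪a, z' - z⟫ ≤ 0 := ha z' hz'Z
        have h1 : ⟪a, z - z'⟫ = -⟪a, z' - z⟫ := by
          rw [← inner_neg_right]
          congr 1
          abel
        rw [inner_add_left]
        nlinarith [h1]
      have hinner : ⟪(WithLp.equiv 2 _).symm (gx, -gy), z - z'⟫ =
          ⟪gx, x - x'⟫ + ⟪-gy, y - y'⟫ := by
        rw [WithLp.prod_inner_apply]
        rfl
      -- step D : diameter estimate
      have hnx : ‖x - x'‖ ≤ D := by
        rw [← dist_eq_norm]; exact hX'diam x hx x' hx'X'
      have hny : ‖y - y'‖ ≤ D := by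
        rw [← dist_eq_norm]; exact hY'diam y hy y' hy'Y'
      have hnz : ‖z - z'‖ ≤ Real.sqrt 2 * D := by
        have h1 : ‖z - z'‖ = Real.sqrt (‖x - x'‖ ^ 2 + ‖y - y'‖ ^ 2) := by
          rw [WithLp.prod_norm_eq_of_L2]
          rfl
        rw [h1]
        have h2 : ‖x - x'‖ ^ 2 + ‖y - y'‖ ^ 2 ≤ 2 * D ^ 2 := by
          nlinarith [norm_nonneg (x - x'), norm_nonneg (y - y')]
        calc Real.sqrt (‖x - x'‖ ^ 2 + ‖y - y'‖ ^ 2) ≤ Real.sqrt (2 * D ^ 2) :=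
              Real.sqrt_le_sqrt h2
          _ = Real.sqrt 2 * D := by
              rw [Real.sqrt_mul (by norm_num : (0:ℝ) ≤ 2), Real.sqrt_sq hD0]
      have hC : ⟪(WithLp.equiv 2 _).symm (gx, -gy) + a, z - z'⟫ ≤
          ‖(WithLp.equiv 2 _).symm (gx, -gy) + a‖ * ‖z - z'‖ :=
        real_inner_le_norm _ _
      have hC2 : ‖(WithLp.equiv 2 _).symm (gx, -gy) + a‖ * ‖z - z'‖ ≤
          ‖(WithLp.equiv 2 _).symm (gx, -gy) + a‖ * (Real.sqrt 2 * D) :=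
        mul_le_mul_of_nonneg_left hnz (norm_nonneg _)
      -- combine
      rw [hFz, smul_eq_mul]
      have hgoal : f ((WithLp.equiv 2 _).symm (x, y')) - f ((WithLp.equiv 2 _).symm (x', y)) ≤
          ⟪gx, x - x'⟫ + ⟪-gy, y - y'⟫ := by
        have e1 : ⟪gx, x - x'⟫ = -⟪gx, x' - x⟫ := by
          rw [← inner_neg_right]; congr 1; abel
        have e2 : ⟪-gy, y - y'⟫ = ⟪gy, y' - y⟫ := by
          rw [inner_neg_left, ← inner_neg_right]; congr 1; abel
        rw [e1, e2]
        linarith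
      rw [← hinner] at hgoal
      calc f ((WithLp.equiv 2 _).symm (x, y')) - f ((WithLp.equiv 2 _).symm (x', y)) ≤
            ⟪(WithLp.equiv 2 _).symm (gx, -gy), z - z'⟫ := hgoal
        _ ≤ ⟪(WithLp.equiv 2 _).symm (gx, -gy) + a, z - z'⟫ := hB
        _ ≤ ‖(WithLp.equiv 2 _).symm (gx, -gy) + a‖ * ‖z - z'‖ := hC
        _ ≤ ‖(WithLp.equiv 2 _).symm (gx, -gy) + a‖ * (Real.sqrt 2 * D) := hC2
        _ = Real.sqrt 2 * D * ‖(WithLp.equiv 2 _).symm (gx, -gy) + a‖ := by ring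
  -- conclude via sSup / sInf
  obtain ⟨x0, hx0⟩ := id hX'ne
  have hAne : ((fun y' => f ((WithLp.equiv 2 _).symm (x, y'))) '' Y').Nonempty :=
    hY'ne.image _
  have hBne : ((fun x' => f ((WithLp.equiv 2 _).symm (x', y))) '' X').Nonempty :=
    hX'ne.image _
  have hSup : ∀ x' ∈ X', sSup ((fun y' => f ((WithLp.equiv 2 _).symm (x, y'))) '' Y') ≤
      Real.sqrt 2 * D * R + f ((WithLp.equiv 2 _).symm (x', y)) := by
    intro x' hx'
    apply csSup_le hAne
    rintro b ⟨y', hy', rfl⟩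
    linarith [key x' hx' y' hy']
  have hInf : sSup ((fun y' => f ((WithLp.equiv 2 _).symm (x, y'))) '' Y') -
      Real.sqrt 2 * D * R ≤
      sInf ((fun x' => f ((WithLp.equiv 2 _).symm (x', y))) '' X') := by
    apply le_csInf hBne
    rintro b ⟨x', hx', rfl⟩
    linarith [hSup x' hx']
  linarith
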